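/- arXiv:2006.12238 — 3 statements merged into one kernel-verified Lean document; each statement's English description precedes it below -/
import Mathlib

section
/- Let A ∈ ℂ and B > 0 be real, and set Γ = |A|²/B. Then for every γ > −1 and every ξ ∈ ℂ, log(1 + γ) − γ + 2√(1 + γ)·Re(conj(ξ)·A) − |ξ|²·(|A|² + B) ≤ log(1 + Γ), and equality holds for γ = Γ and ξ = √(1 + Γ)·A/(|A|² + B). -/
/-- Completing the square over `ξ`. -/
lemma xi_bound (A ξ : ℂ) (C s : ℝ) (hC : 0 < C) :
    2 * s * ((starRingEnd ℂ) ξ * A).re - ‖ξ‖ ^ 2 * C ≤ s ^ 2 * ‖A‖ ^ 2 / C := by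
  rw [sub_le_iff_le_add, ← sub_le_iff_le_add', sub_div' hC.ne', div_le_iff₀ hC] at *
  · have h1 : (0:ℝ) ≤ (C * ξ.re - s * A.re) ^ 2 := sq_nonneg _
    have h2 : (0:ℝ) ≤ (C * ξ.im - s * A.im) ^ 2 := sq_nonneg _
    simp only [Complex.sq_norm, Complex.normSq_apply, Complex.mul_re,
      Complex.conj_re, Complex.conj_im]
    nlinarith [h1, h2]

/-- Per-user equivalence of (P1) and (P2): with `Γ = |A|²/B`, for all `γ > −1` and `ξ ∈ ℂ`,
`log(1+γ) − γ + 2√(1+γ) Re(conj(ξ) A) − |ξ|² (|A|² + B) ≤ log(1+Γ)`, with equality at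
`γ = Γ`, `ξ = √(1+Γ) A/(|A|² + B)`. -/
theorem per_user_transform_equivalence (A : ℂ) (B : ℝ) (hB : 0 < B) :
    let Γ : ℝ := ‖A‖ ^ 2 / B
    (∀ γ : ℝ, -1 < γ → ∀ ξ : ℂ,
      Real.log (1 + γ) - γ + 2 * Real.sqrt (1 + γ) * ((starRingEnd ℂ) ξ * A).re
        - ‖ξ‖ ^ 2 * (‖A‖ ^ 2 + B) ≤ Real.log (1 + Γ)) ∧
    (Real.log (1 + Γ) - Γ
        + 2 * Real.sqrt (1 + Γ)
          * ((starRingEnd ℂ) ((Real.sqrt (1 + Γ) : ℂ) * A / ((‖A‖ ^ 2 + B : ℝ) : ℂ)) * A).re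
        - ‖(Real.sqrt (1 + Γ) : ℂ) * A / ((‖A‖ ^ 2 + B : ℝ) : ℂ)‖ ^ 2 * (‖A‖ ^ 2 + B)
      = Real.log (1 + Γ)) := by
  intro Γ
  have hΓ0 : 0 ≤ Γ := div_nonneg (by positivity) hB.le
  have hΓ1 : 0 < 1 + Γ := by linarith
  set C : ℝ := ‖A‖ ^ 2 + B with hCdef
  have hC : 0 < C := by rw [hCdef]; positivity
  have hAC : ‖A‖ ^ 2 = Γ * B := (div_mul_cancel₀ _ hB.ne').symm
  have hCB : C = B * (1 + Γ) := by rw [hCdef, hAC]; ring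
  clear_value Γ C
  constructor
  · intro γ hγ ξ
    have hγ1 : 0 < 1 + γ := by linarith
    have hs : Real.sqrt (1 + γ) ^ 2 = 1 + γ := Real.sq_sqrt hγ1.le
    have h1 := xi_bound A ξ C (Real.sqrt (1 + γ)) hC
    rw [hs] at h1
    have hlog : Real.log (1 + γ) - Real.log (1 + Γ) ≤ (1 + γ) / (1 + Γ) - 1 := by
      have := Real.log_le_sub_one_of_pos (div_pos hγ1 hΓ1)
      rwa [Real.log_div hγ1.ne' hΓ1.ne'] at this
    have key : (1 + γ) * ‖A‖ ^ 2 / C - γ ≤ Real.log (1 + Γ) - Real.log (1 + γ) := by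
      have h2 : (1 + γ) * ‖A‖ ^ 2 / C = (1 + γ) * Γ / (1 + Γ) := by
        rw [hAC, hCB]; field_simp
      rw [h2]
      have h3 : (1 + γ) * Γ / (1 + Γ) - γ = -((1 + γ) / (1 + Γ) - 1) := by
        field_simp; ring
      linarith
    linarith
  · have hs : Real.sqrt (1 + Γ) ^ 2 = 1 + Γ := Real.sq_sqrt hΓ1.le
    have hmul : (starRingEnd ℂ) A * A = ((‖A‖ ^ 2 : ℝ) : ℂ) := by
      rw [← Complex.normSq_eq_conj_mul_self, Complex.normSq_eq_norm_sq]
    have hre : ((starRingEnd ℂ) ((Real.sqrt (1 + Γ) : ℂ) * A / ((C : ℝ) : ℂ)) * A).re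
        = Real.sqrt (1 + Γ) * ‖A‖ ^ 2 / C := by
      rw [map_div₀, map_mul, Complex.conj_ofReal, Complex.conj_ofReal, div_mul_eq_mul_div,
        mul_assoc, hmul, ← Complex.ofReal_mul, ← Complex.ofReal_div, Complex.ofReal_re]
    have hnorm : ‖(Real.sqrt (1 + Γ) : ℂ) * A / ((C : ℝ) : ℂ)‖ ^ 2
        = (1 + Γ) * ‖A‖ ^ 2 / C ^ 2 := by
      rw [norm_div, norm_mul, div_pow, mul_pow, Complex.norm_real, Complex.norm_real,
        Real.norm_eq_abs, Real.norm_eq_abs, sq_abs, sq_abs, hs]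
    rw [hre, hnorm]
    have hΓeq : (1 + Γ) * ‖A‖ ^ 2 / C = Γ := by
      rw [hAC, hCB]; field_simp
    have h1 : 2 * Real.sqrt (1 + Γ) * (Real.sqrt (1 + Γ) * ‖A‖ ^ 2 / C)
        = 2 * ((1 + Γ) * ‖A‖ ^ 2 / C) := by
      linear_combination (2 * ‖A‖ ^ 2 / C) * hs
    have h2 : (1 + Γ) * ‖A‖ ^ 2 / C ^ 2 * C = (1 + Γ) * ‖A‖ ^ 2 / C := by
      field_simp
    rw [h1, h2, hΓeq]; ring
end

section
/- Let Z be an n×n complex Hermitian matrix, ζ ∈ ℝ such that ζ I − Z is positive semidefinite, and q ∈ ℂⁿ. Define g(θ) = Re(θᴴ Z θ) − 2 Re(θᴴ q). Then for all θ, θ₀ ∈ ℂⁿ with |θᵢ| = 1 and |(θ₀)ᵢ| = 1 for every i, g(θ) ≤ 2 Re(θᴴ ((Z − ζ I) θ₀ − q)) + 2 ζ n − Re(θ₀ᴴ Z θ₀), and this bound holds with equality when θ = θ₀. -/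
open Matrix ComplexOrder

lemma unit_dot {n : ℕ} (θ : Fin n → ℂ) (h : ∀ i, ‖θ i‖ = 1) :
    star θ ⬝ᵥ θ = (n : ℂ) := by
  simp only [dotProduct, Pi.star_apply]
  have : ∀ i, (starRingEnd ℂ) (θ i) * θ i = 1 := by
    intro i
    rw [Complex.conj_mul']
    simp [Complex.normSq_eq_norm_sq, h i]
  simp [this]

lemma herm_cross {n : ℕ} {M : Matrix (Fin n) (Fin n) ℂ} (hM : M.IsHermitian)
    (x y : Fin n → ℂ) : star y ⬝ᵥ M *ᵥ x = star (star x ⬝ᵥ M *ᵥ y) := by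
  rw [Matrix.dotProduct_mulVec, ← Matrix.star_dotProduct_star, Matrix.star_mulVec, hM.eq,
    star_star]

lemma quad_expand {n : ℕ} (A : Matrix (Fin n) (Fin n) ℂ) (x y : Fin n → ℂ) :
    star (x - y) ⬝ᵥ A *ᵥ (x - y)
      = star x ⬝ᵥ A *ᵥ x - star x ⬝ᵥ A *ᵥ y - star y ⬝ᵥ A *ᵥ x + star y ⬝ᵥ A *ᵥ y := by
  rw [star_sub, Matrix.mulVec_sub, sub_dotProduct, dotProduct_sub,
    dotProduct_sub]
  ring

/-- Validity and tangency of the MM majorizer for the IRS phase-shift subproblem: for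
unit-modulus `θ, θ₀`, `g(θ) ≤ 2 Re(θᴴ ((Z − ζI)θ₀ − q)) + 2ζn − Re(θ₀ᴴ Z θ₀)`, with
equality when `θ = θ₀`. -/
theorem mm_majorizer_valid_tangent {n : ℕ} (Z : Matrix (Fin n) (Fin n) ℂ)
    (hZ : Z.IsHermitian) (ζ : ℝ)
    (hζ : ((ζ : ℂ) • (1 : Matrix (Fin n) (Fin n) ℂ) - Z).PosSemidef)
    (q : Fin n → ℂ) :
    let g : (Fin n → ℂ) → ℝ := fun θ => (star θ ⬝ᵥ Z *ᵥ θ).re - 2 * (star θ ⬝ᵥ q).re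
    ∀ θ θ₀ : Fin n → ℂ, (∀ i, ‖θ i‖ = 1) → (∀ i, ‖θ₀ i‖ = 1) →
      (g θ ≤ 2 * (star θ ⬝ᵥ ((Z - (ζ : ℂ) • (1 : Matrix (Fin n) (Fin n) ℂ)) *ᵥ θ₀ - q)).re
          + 2 * ζ * n - (star θ₀ ⬝ᵥ Z *ᵥ θ₀).re) ∧
      (θ = θ₀ →
        g θ = 2 * (star θ ⬝ᵥ ((Z - (ζ : ℂ) • (1 : Matrix (Fin n) (Fin n) ℂ)) *ᵥ θ₀ - q)).re
          + 2 * ζ * n - (star θ₀ ⬝ᵥ Z *ᵥ θ₀).re) := by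
  intro g θ θ₀ hθ hθ₀
  set M : Matrix (Fin n) (Fin n) ℂ := (ζ : ℂ) • (1 : Matrix (Fin n) (Fin n) ℂ) - Z with hMdef
  have hM : M.IsHermitian := hζ.1
  -- scalar identities
  have hsmul : ∀ x y : Fin n → ℂ, star x ⬝ᵥ ((ζ : ℂ) • (1 : Matrix (Fin n) (Fin n) ℂ)) *ᵥ y
      = (ζ : ℂ) * (star x ⬝ᵥ y) := by
    intro x y
    rw [Matrix.smul_mulVec, Matrix.one_mulVec, dotProduct_smul, smul_eq_mul]
  have hMθ : ∀ x : Fin n → ℂ, (∀ i, ‖x i‖ = 1) →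
      (star x ⬝ᵥ M *ᵥ x).re = ζ * n - (star x ⬝ᵥ Z *ᵥ x).re := by
    intro x hx
    rw [hMdef, Matrix.sub_mulVec, dotProduct_sub, hsmul, unit_dot x hx]
    simp
  have hcross : (star θ₀ ⬝ᵥ M *ᵥ θ).re = (star θ ⬝ᵥ M *ᵥ θ₀).re := by
    rw [herm_cross hM, Complex.star_def, Complex.conj_re]
  -- expansion of the quadratic form at θ - θ₀
  have hexp := quad_expand M θ θ₀
  have hpos : 0 ≤ (star (θ - θ₀) ⬝ᵥ M *ᵥ (θ - θ₀)).re := by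
    have := hζ.dotProduct_mulVec_nonneg (θ - θ₀)
    exact (Complex.le_def.mp this).1
  rw [hexp] at hpos
  simp only [Complex.add_re, Complex.sub_re] at hpos
  rw [hcross, hMθ θ hθ, hMθ θ₀ hθ₀] at hpos
  -- rewrite the RHS dot product
  have hrhs : (star θ ⬝ᵥ ((Z - (ζ : ℂ) • (1 : Matrix (Fin n) (Fin n) ℂ)) *ᵥ θ₀ - q)).re
      = -(star θ ⬝ᵥ M *ᵥ θ₀).re - (star θ ⬝ᵥ q).re := by
    have : (Z - (ζ : ℂ) • (1 : Matrix (Fin n) (Fin n) ℂ)) = -M := by rw [hMdef, neg_sub]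
    rw [this, dotProduct_sub, Matrix.neg_mulVec, dotProduct_neg]
    simp
  constructor
  · show (star θ ⬝ᵥ Z *ᵥ θ).re - 2 * (star θ ⬝ᵥ q).re ≤ _
    rw [hrhs]
    linarith
  · intro heq
    subst heq
    show (star θ ⬝ᵥ Z *ᵥ θ).re - 2 * (star θ ⬝ᵥ q).re = _
    rw [hrhs]
    have h1 : (star θ ⬝ᵥ M *ᵥ θ).re = ζ * n - (star θ ⬝ᵥ Z *ᵥ θ).re := hMθ θ hθ
    linarith
end

section
/- Let Z be an n×n complex Hermitian matrix, ζ ∈ ℝ such that ζ I − Z is positive semidefinite, and q ∈ ℂⁿ. Let θ₀ ∈ ℂⁿ have |(θ₀)ᵢ| = 1 for all i, set u = (Z − ζ I) θ₀ − q, and suppose uᵢ ≠ 0 for every i. Define the MM iterate θ⁺ by θ⁺ᵢ = −uᵢ/|uᵢ|. Then θ⁺ has unit-modulus entries and g(θ⁺) ≤ g(θ₀), where g(θ) = Re(θᴴ Z θ) − 2 Re(θᴴ q). -/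
open Matrix ComplexOrder

/-- Monotone descent of the MM update: with `Z` Hermitian, `ζI − Z` PSD, `θ₀` unit
modulus, `u = (Z − ζI)θ₀ − q` with nonzero entries, the iterate `θ⁺ᵢ = −uᵢ/|uᵢ|` has
unit-modulus entries and satisfies `g(θ⁺) ≤ g(θ₀)`. -/
theorem mm_descent {n : ℕ} (Z : Matrix (Fin n) (Fin n) ℂ) (hZ : Z.IsHermitian) (ζ : ℝ)
    (hζ : ((ζ : ℂ) • (1 : Matrix (Fin n) (Fin n) ℂ) - Z).PosSemidef)
    (q : Fin n → ℂ) (θ₀ : Fin n → ℂ) (hθ₀ : ∀ i, ‖θ₀ i‖ = 1)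
    (u : Fin n → ℂ)
    (hu : u = (Z - (ζ : ℂ) • (1 : Matrix (Fin n) (Fin n) ℂ)) *ᵥ θ₀ - q)
    (hune : ∀ i, u i ≠ 0)
    (θp : Fin n → ℂ) (hθp : ∀ i, θp i = -(u i) / (‖u i‖ : ℂ)) :
    (∀ i, ‖θp i‖ = 1) ∧
    (star θp ⬝ᵥ Z *ᵥ θp).re - 2 * (star θp ⬝ᵥ q).re ≤
      (star θ₀ ⬝ᵥ Z *ᵥ θ₀).re - 2 * (star θ₀ ⬝ᵥ q).re := by
  set M : Matrix (Fin n) (Fin n) ℂ := (ζ : ℂ) • 1 - Z with hMdef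
  have hune' : ∀ i, ‖u i‖ ≠ 0 := fun i => norm_ne_zero_iff.mpr (hune i)
  -- unit modulus of the iterate
  have hθpnorm : ∀ i, ‖θp i‖ = 1 := by
    intro i
    rw [hθp, norm_div, norm_neg, Complex.norm_real, norm_norm]
    exact div_self (hune' i)
  refine ⟨hθpnorm, ?_⟩
  -- Hermitian symmetry of the form
  have hsym : ∀ x y : Fin n → ℂ,
      (star x ⬝ᵥ M *ᵥ y).re = (star y ⬝ᵥ M *ᵥ x).re := by
    intro x y
    have h1 : star x ⬝ᵥ M *ᵥ y = star (star (M *ᵥ y) ⬝ᵥ x) :=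
      Matrix.star_dotProduct _ _
    rw [h1, Matrix.star_mulVec, hζ.1, ← Matrix.dotProduct_mulVec,
      Complex.star_def, Complex.conj_re]
  -- unit vectors have dot product n
  have hunit : ∀ (θ : Fin n → ℂ), (∀ i, ‖θ i‖ = 1) → star θ ⬝ᵥ θ = (n : ℂ) := by
    intro θ h
    have : ∀ i, (starRingEnd ℂ) (θ i) * θ i = 1 := by
      intro i
      rw [mul_comm, Complex.mul_conj, Complex.normSq_eq_norm_sq,
        h i]
      norm_num
    simp [dotProduct, this]
  -- quadratic form via M
  have hself : ∀ (θ : Fin n → ℂ), (∀ i, ‖θ i‖ = 1) →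
      (star θ ⬝ᵥ M *ᵥ θ).re = ζ * n - (star θ ⬝ᵥ Z *ᵥ θ).re := by
    intro θ h
    have hc : star θ ⬝ᵥ M *ᵥ θ = (ζ : ℂ) * (n : ℂ) - star θ ⬝ᵥ Z *ᵥ θ := by
      rw [hMdef, Matrix.sub_mulVec, dotProduct_sub, Matrix.smul_mulVec,
        Matrix.one_mulVec, dotProduct_smul, hunit θ h, smul_eq_mul]
    rw [hc]
    simp [Complex.sub_re, Complex.mul_re]
  -- M *ᵥ θ₀ = -(u + q)
  have hM0 : M *ᵥ θ₀ = -(u + q) := by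
    have : M = -(Z - (ζ : ℂ) • 1) := by rw [hMdef, neg_sub]
    rw [this, Matrix.neg_mulVec, hu]
    abel
  have hcross : ∀ x : Fin n → ℂ,
      (star x ⬝ᵥ M *ᵥ θ₀).re = -(star x ⬝ᵥ u).re - (star x ⬝ᵥ q).re := by
    intro x
    rw [hM0]
    have : star x ⬝ᵥ -(u + q) = -(star x ⬝ᵥ u) - star x ⬝ᵥ q := by
      rw [dotProduct_neg, dotProduct_add]; ring
    rw [this]
    simp [Complex.sub_re, Complex.neg_re]
  -- PSD inequality
  have hA : 0 ≤ (star (θp - θ₀) ⬝ᵥ M *ᵥ (θp - θ₀)).re := by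
    have h := hζ.dotProduct_mulVec_nonneg (θp - θ₀)
    rw [Complex.le_def] at h
    simpa using h.1
  have hexp : (star (θp - θ₀) ⬝ᵥ M *ᵥ (θp - θ₀)).re
      = (star θp ⬝ᵥ M *ᵥ θp).re - 2 * (star θp ⬝ᵥ M *ᵥ θ₀).re
        + (star θ₀ ⬝ᵥ M *ᵥ θ₀).re := by
    have hc : star (θp - θ₀) ⬝ᵥ M *ᵥ (θp - θ₀)
        = star θp ⬝ᵥ M *ᵥ θp - star θp ⬝ᵥ M *ᵥ θ₀
          - (star θ₀ ⬝ᵥ M *ᵥ θp - star θ₀ ⬝ᵥ M *ᵥ θ₀) := by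
      rw [star_sub, Matrix.mulVec_sub, sub_dotProduct, dotProduct_sub, dotProduct_sub]
    rw [hc]
    have := hsym θ₀ θp
    simp only [Complex.sub_re]
    linarith
  -- entrywise values of the linear terms
  have hpu : (star θp ⬝ᵥ u).re = -(∑ i, ‖u i‖) := by
    have hterm : ∀ i, star (θp i) * u i = -(‖u i‖ : ℂ) := by
      intro i
      have hr : ((‖u i‖ : ℝ) : ℂ) ≠ 0 := by
        exact_mod_cast (hune' i)
      rw [hθp i, star_div₀, star_neg, Complex.star_def, Complex.conj_ofReal]
      have hms : (starRingEnd ℂ) (u i) * u i = ((‖u i‖ ^ 2 : ℝ) : ℂ) := by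
        rw [mul_comm, Complex.mul_conj, Complex.normSq_eq_norm_sq]
      rw [div_mul_eq_mul_div, neg_mul, hms, neg_div]
      congr 1
      push_cast
      rw [sq, mul_div_assoc, div_self hr, mul_one]
    simp only [dotProduct, Pi.star_apply, hterm]
    rw [Complex.re_sum]
    simp
  have h0u : -(∑ i, ‖u i‖) ≤ (star θ₀ ⬝ᵥ u).re := by
    simp only [dotProduct, Pi.star_apply]
    rw [Complex.re_sum, ← Finset.sum_neg_distrib]
    apply Finset.sum_le_sum
    intro i _
    have h1 : |((star (θ₀ i) * u i).re)| ≤ ‖star (θ₀ i) * u i‖ :=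
      Complex.abs_re_le_norm _
    have h2 : ‖star (θ₀ i) * u i‖ = ‖u i‖ := by
      rw [norm_mul, norm_star, hθ₀ i, one_mul]
    rw [h2] at h1
    have := neg_abs_le ((star (θ₀ i) * u i).re)
    linarith
  -- assemble
  have r1 := hself θp hθpnorm
  have r2 := hself θ₀ hθ₀
  have r3 := hcross θp
  have r4 := hcross θ₀
  rw [hexp] at hA
  linarith [hA, h0u, hpu, r1, r2, r3, r4]
end
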